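/- G has no subgroup of index 2, no subgroup of index 3, and no subgroup of index 4. (Equivalently, the Weber–Seifert dodecahedral space has no connected covers of degree 2, 3, or 4.) -/

import Mathlib

/-- Generators of the fundamental group of the Weber–Seifert dodecahedral space. -/
inductive Gen : Type
  | u | v | w | x | y | z
  deriving DecidableEq

open FreeGroup in
/-- The six relators of the Weber–Seifert presentation. -/
def wsRels : Set (FreeGroup Gen) :=
  { of .u * of .x * (of .y)⁻¹ * (of .v)⁻¹ * of .w,
    of .u * of .y * (of .z)⁻¹ * (of .w)⁻¹ * of .x,
    of .u * of .z * (of .v)⁻¹ * (of .x)⁻¹ * of .y,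
    of .u * of .v * (of .w)⁻¹ * (of .y)⁻¹ * of .z,
    of .u * of .w * (of .x)⁻¹ * (of .z)⁻¹ * of .v,
    of .v * of .x * of .z * of .w * of .y }

/-- The fundamental group of the Weber–Seifert hyperbolic dodecahedral space. -/
abbrev G : Type := PresentedGroup wsRels

def u : G := PresentedGroup.of Gen.u
def v : G := PresentedGroup.of Gen.v
def w : G := PresentedGroup.of Gen.w
def x : G := PresentedGroup.of Gen.x
def y : G := PresentedGroup.of Gen.y
def z : G := PresentedGroup.of Gen.z


/-! ### Auxiliary: in a commutative group, the Weber–Seifert relations force fifth powers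
to be trivial (the abelianization is `(ℤ/5)³`). -/

section CommAux

variable {A : Type*} [CommGroup A]

private lemma pow5_of_rels (a b c d e f : A)
    (h1 : a * d * e⁻¹ * b⁻¹ * c = 1) (h2 : a * e * f⁻¹ * c⁻¹ * d = 1)
    (h3 : a * f * b⁻¹ * d⁻¹ * e = 1) (h4 : a * b * c⁻¹ * e⁻¹ * f = 1)
    (h5 : a * c * d⁻¹ * f⁻¹ * b = 1) (h6 : b * d * f * c * e = 1) :
    a ^ 5 = 1 ∧ b ^ 5 = 1 ∧ c ^ 5 = 1 ∧ d ^ 5 = 1 ∧ e ^ 5 = 1 ∧ f ^ 5 = 1 := by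
  refine ⟨?_, ?_, ?_, ?_, ?_, ?_⟩
  · have key : a ^ 5 = (a * d * e⁻¹ * b⁻¹ * c) * (a * e * f⁻¹ * c⁻¹ * d) *
        (a * f * b⁻¹ * d⁻¹ * e) * (a * b * c⁻¹ * e⁻¹ * f) * (a * c * d⁻¹ * f⁻¹ * b) := by
      apply Additive.ofMul.injective
      simp only [ofMul_pow, ofMul_mul, ofMul_inv]
      abel
    rw [key, h1, h2, h3, h4, h5]; simp
  · have key : b ^ 5 = (a * d * e⁻¹ * b⁻¹ * c)⁻¹ * (a * f * b⁻¹ * d⁻¹ * e)⁻¹ *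
        (a * b * c⁻¹ * e⁻¹ * f) * (a * c * d⁻¹ * f⁻¹ * b) * (b * d * f * c * e) := by
      apply Additive.ofMul.injective
      simp only [ofMul_pow, ofMul_mul, ofMul_inv]
      abel
    rw [key, h1, h3, h4, h5, h6]; simp
  · have key : c ^ 5 = (a * d * e⁻¹ * b⁻¹ * c) * (a * e * f⁻¹ * c⁻¹ * d)⁻¹ *
        (a * b * c⁻¹ * e⁻¹ * f)⁻¹ * (a * c * d⁻¹ * f⁻¹ * b) * (b * d * f * c * e) := by
      apply Additive.ofMul.injective
      simp only [ofMul_pow, ofMul_mul, ofMul_inv]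
      abel
    rw [key, h1, h2, h4, h5, h6]; simp
  · have key : d ^ 5 = (a * d * e⁻¹ * b⁻¹ * c) * (a * e * f⁻¹ * c⁻¹ * d) *
        (a * f * b⁻¹ * d⁻¹ * e)⁻¹ * (a * c * d⁻¹ * f⁻¹ * b)⁻¹ * (b * d * f * c * e) := by
      apply Additive.ofMul.injective
      simp only [ofMul_pow, ofMul_mul, ofMul_inv]
      abel
    rw [key, h1, h2, h3, h5, h6]; simp
  · have key : e ^ 5 = (a * d * e⁻¹ * b⁻¹ * c)⁻¹ * (a * e * f⁻¹ * c⁻¹ * d) *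
        (a * f * b⁻¹ * d⁻¹ * e) * (a * b * c⁻¹ * e⁻¹ * f)⁻¹ * (b * d * f * c * e) := by
      apply Additive.ofMul.injective
      simp only [ofMul_pow, ofMul_mul, ofMul_inv]
      abel
    rw [key, h1, h2, h3, h4, h6]; simp
  · have key : f ^ 5 = (a * e * f⁻¹ * c⁻¹ * d)⁻¹ * (a * f * b⁻¹ * d⁻¹ * e) *
        (a * b * c⁻¹ * e⁻¹ * f) * (a * c * d⁻¹ * f⁻¹ * b)⁻¹ * (b * d * f * c * e) := by
      apply Additive.ofMul.injective
      simp only [ofMul_pow, ofMul_mul, ofMul_inv]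
      abel
    rw [key, h2, h3, h4, h5, h6]; simp

end CommAux

/-! ### The relations hold in `G`. -/

private lemma wsRel_eq_one {r : FreeGroup Gen} (hr : r ∈ wsRels) :
    PresentedGroup.mk wsRels r = 1 :=
  (QuotientGroup.eq_one_iff _).mpr (Subgroup.subset_normalClosure hr)

private lemma rel1 : u * x * y⁻¹ * v⁻¹ * w = 1 := by
  have h := wsRel_eq_one (show _ ∈ wsRels from Set.mem_insert _ _)
  rw [map_mul, map_mul, map_mul, map_mul, map_inv, map_inv] at h
  exact h

private lemma rel2 : u * y * z⁻¹ * w⁻¹ * x = 1 := by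
  have h := wsRel_eq_one (show _ ∈ wsRels from
    Set.mem_insert_iff.mpr (Or.inr (Set.mem_insert _ _)))
  rw [map_mul, map_mul, map_mul, map_mul, map_inv, map_inv] at h
  exact h

private lemma rel3 : u * z * v⁻¹ * x⁻¹ * y = 1 := by
  have h := wsRel_eq_one (show _ ∈ wsRels from
    Set.mem_insert_iff.mpr (Or.inr (Set.mem_insert_iff.mpr (Or.inr (Set.mem_insert _ _)))))
  rw [map_mul, map_mul, map_mul, map_mul, map_inv, map_inv] at h
  exact h

private lemma rel4 : u * v * w⁻¹ * y⁻¹ * z = 1 := by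
  have h := wsRel_eq_one (show _ ∈ wsRels from
    Set.mem_insert_iff.mpr (Or.inr (Set.mem_insert_iff.mpr (Or.inr
      (Set.mem_insert_iff.mpr (Or.inr (Set.mem_insert _ _)))))))
  rw [map_mul, map_mul, map_mul, map_mul, map_inv, map_inv] at h
  exact h

private lemma rel5 : u * w * x⁻¹ * z⁻¹ * v = 1 := by
  have h := wsRel_eq_one (show _ ∈ wsRels from
    Set.mem_insert_iff.mpr (Or.inr (Set.mem_insert_iff.mpr (Or.inr
      (Set.mem_insert_iff.mpr (Or.inr (Set.mem_insert_iff.mpr (Or.inr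
        (Set.mem_insert _ _)))))))))
  rw [map_mul, map_mul, map_mul, map_mul, map_inv, map_inv] at h
  exact h

private lemma rel6 : v * x * z * w * y = 1 := by
  have h := wsRel_eq_one (show _ ∈ wsRels from
    Set.mem_insert_iff.mpr (Or.inr (Set.mem_insert_iff.mpr (Or.inr
      (Set.mem_insert_iff.mpr (Or.inr (Set.mem_insert_iff.mpr (Or.inr
        (Set.mem_insert_iff.mpr (Or.inr rfl))))))))))
  rw [map_mul, map_mul, map_mul, map_mul] at h
  exact h

/-! ### The abelianization of `G` has exponent 5. -/

private lemma ab_gen_pow5 :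
    (Abelianization.of u) ^ 5 = 1 ∧ (Abelianization.of v) ^ 5 = 1 ∧
    (Abelianization.of w) ^ 5 = 1 ∧ (Abelianization.of x) ^ 5 = 1 ∧
    (Abelianization.of y) ^ 5 = 1 ∧ (Abelianization.of z) ^ 5 = 1 := by
  have h1 := congrArg (Abelianization.of (G := G)) rel1
  have h2 := congrArg (Abelianization.of (G := G)) rel2
  have h3 := congrArg (Abelianization.of (G := G)) rel3
  have h4 := congrArg (Abelianization.of (G := G)) rel4
  have h5 := congrArg (Abelianization.of (G := G)) rel5
  have h6 := congrArg (Abelianization.of (G := G)) rel6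
  simp only [map_mul, map_inv, map_one] at h1 h2 h3 h4 h5 h6
  exact pow5_of_rels _ _ _ _ _ _ h1 h2 h3 h4 h5 h6

private lemma ab_pow5 (g : G) : (Abelianization.of g) ^ 5 = 1 := by
  obtain ⟨p1, p2, p3, p4, p5, p6⟩ := ab_gen_pow5
  have key : (powMonoidHom 5 : Abelianization G →* Abelianization G).comp Abelianization.of
      = (1 : G →* Abelianization G) := by
    apply PresentedGroup.ext
    intro g
    cases g
    · exact p1
    · exact p2
    · exact p3
    · exact p4
    · exact p5
    · exact p6
  have := DFunLike.congr_fun key g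
  simpa [powMonoidHom] using this

private lemma pow5_mem_commutator (g : G) : g ^ 5 ∈ commutator G := by
  have h := ab_pow5 g
  rw [← map_pow] at h
  have h' : (QuotientGroup.mk (g ^ 5) : G ⧸ commutator G) = 1 := h
  exact (QuotientGroup.eq_one_iff (g ^ 5)).mp h'

/-! ### Any homomorphism from `G` to a finite group of order dividing 24 is trivial
(descent along the derived series). -/

private lemma map_mem_derivedSeries {L : Type*} [Group L] [Finite L]
    (hL : Nat.card L ∣ 24) (φ : G →* L) :
    ∀ (k : ℕ) (g : G), φ g ∈ derivedSeries L k := by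
  intro k
  induction k with
  | zero => exact fun g => Subgroup.mem_top _
  | succ k ih =>
    intro g
    haveI : (derivedSeries L (k + 1)).Normal := derivedSeries_normal L (k + 1)
    set N := derivedSeries L (k + 1) with hN
    let q : L →* L ⧸ N := QuotientGroup.mk' N
    have hker : ∀ m ∈ commutator G, q (φ m) = 1 := by
      have hle : commutator G ≤ (q.comp φ).ker := by
        rw [commutator_def, Subgroup.commutator_le]
        intro g1 _ g2 _
        rw [MonoidHom.mem_ker, MonoidHom.comp_apply, map_commutatorElement]
        refine (QuotientGroup.eq_one_iff _).mpr ?_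
        rw [hN, derivedSeries_succ]
        exact Subgroup.commutator_mem_commutator (ih g1) (ih g2)
      intro m hm
      exact hle hm
    have h5 : (q (φ g)) ^ 5 = 1 := by
      rw [← map_pow, ← map_pow]
      exact hker _ (pow5_mem_commutator g)
    have hord5 : orderOf (q (φ g)) ∣ 5 := orderOf_dvd_of_pow_eq_one h5
    have hord24 : orderOf (q (φ g)) ∣ 24 := by
      refine dvd_trans (orderOf_dvd_of_pow_eq_one pow_card_eq_one') ?_
      exact dvd_trans (Subgroup.card_dvd_of_surjective q (QuotientGroup.mk'_surjective N)) hL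
    have hordone : orderOf (q (φ g)) ∣ 1 := by
      have := Nat.dvd_gcd hord5 hord24
      simpa using this
    have hone : q (φ g) = 1 := orderOf_eq_one_iff.mp (Nat.dvd_one.mp hordone)
    exact (QuotientGroup.eq_one_iff (φ g)).mp hone

/-! ### `Equiv.Perm (Fin 4)` is solvable, via an explicit derived-series chain. -/

section Perm4

open Equiv
open scoped commutatorElement

/-- An explicit enumeration of all 24 permutations of `Fin 4`. -/
private def T : Fin 24 → Perm (Fin 4) := ![
  ⟨![0,1,2,3], ![0,1,2,3], by decide, by decide⟩,
  ⟨![0,1,3,2], ![0,1,3,2], by decide, by decide⟩,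
  ⟨![0,2,1,3], ![0,2,1,3], by decide, by decide⟩,
  ⟨![0,2,3,1], ![0,3,1,2], by decide, by decide⟩,
  ⟨![0,3,1,2], ![0,2,3,1], by decide, by decide⟩,
  ⟨![0,3,2,1], ![0,3,2,1], by decide, by decide⟩,
  ⟨![1,0,2,3], ![1,0,2,3], by decide, by decide⟩,
  ⟨![1,0,3,2], ![1,0,3,2], by decide, by decide⟩,
  ⟨![1,2,0,3], ![2,0,1,3], by decide, by decide⟩,
  ⟨![1,2,3,0], ![3,0,1,2], by decide, by decide⟩,
  ⟨![1,3,0,2], ![2,0,3,1], by decide, by decide⟩,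
  ⟨![1,3,2,0], ![3,0,2,1], by decide, by decide⟩,
  ⟨![2,0,1,3], ![1,2,0,3], by decide, by decide⟩,
  ⟨![2,0,3,1], ![1,3,0,2], by decide, by decide⟩,
  ⟨![2,1,0,3], ![2,1,0,3], by decide, by decide⟩,
  ⟨![2,1,3,0], ![3,1,0,2], by decide, by decide⟩,
  ⟨![2,3,0,1], ![2,3,0,1], by decide, by decide⟩,
  ⟨![2,3,1,0], ![3,2,0,1], by decide, by decide⟩,
  ⟨![3,0,1,2], ![1,2,3,0], by decide, by decide⟩,
  ⟨![3,0,2,1], ![1,3,2,0], by decide, by decide⟩,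
  ⟨![3,1,0,2], ![2,1,3,0], by decide, by decide⟩,
  ⟨![3,1,2,0], ![3,1,2,0], by decide, by decide⟩,
  ⟨![3,2,0,1], ![2,3,1,0], by decide, by decide⟩,
  ⟨![3,2,1,0], ![3,2,1,0], by decide, by decide⟩
]

private def wsPairs : List (Fin 4 × Fin 4) := [(0,1),(0,2),(0,3),(1,2),(1,3),(2,3)]

/-- Evenness of a permutation of `Fin 4` (inversion count is even). -/
private def isEven (σ : Perm (Fin 4)) : Prop :=
  (wsPairs.countP (fun p => decide (σ p.2 < σ p.1))) % 2 = 0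

private instance : DecidablePred isEven := fun σ => by unfold isEven; infer_instance

private lemma injT : Function.Injective T := by
  have h : ∀ i j : Fin 24, T i = T j → i = j := by decide
  exact fun i j => h i j

private lemma surjT : Function.Surjective T := by
  have hcard : Fintype.card (Fin 24) = Fintype.card (Perm (Fin 4)) := by
    simp [Fintype.card_perm, Fintype.card_fin]
    rfl
  exact ((Fintype.bijective_iff_injective_and_card T).mpr ⟨injT, hcard⟩).surjective

private lemma dAone : isEven 1 := by decide
private lemma dAmul : ∀ i j : Fin 24, isEven (T i) → isEven (T j) → isEven (T i * T j) := by
  decide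
private lemma dAinv : ∀ i : Fin 24, isEven (T i) → isEven (T i)⁻¹ := by decide
private lemma d1 : ∀ i j : Fin 24, isEven ⁅T i, T j⁆ := by decide
private lemma dVone : (1 : Perm (Fin 4)) ^ 2 = 1 ∧ isEven 1 := by decide
private lemma dVmul : ∀ i j : Fin 24, (T i ^ 2 = 1 ∧ isEven (T i)) →
    (T j ^ 2 = 1 ∧ isEven (T j)) → ((T i * T j) ^ 2 = 1 ∧ isEven (T i * T j)) := by decide
private lemma dVinv : ∀ i : Fin 24, (T i ^ 2 = 1 ∧ isEven (T i)) →
    ((T i)⁻¹ ^ 2 = 1 ∧ isEven (T i)⁻¹) := by decide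
private lemma d2 : ∀ i j : Fin 24, isEven (T i) → isEven (T j) →
    (⁅T i, T j⁆ ^ 2 = 1 ∧ isEven ⁅T i, T j⁆) := by decide
private lemma d3 : ∀ i j : Fin 24, (T i ^ 2 = 1 ∧ isEven (T i)) →
    (T j ^ 2 = 1 ∧ isEven (T j)) → ⁅T i, T j⁆ = 1 := by decide

/-- The alternating subgroup of `Perm (Fin 4)`, defined via inversion parity. -/
private def A4sub : Subgroup (Perm (Fin 4)) where
  carrier := {σ | isEven σ}
  one_mem' := dAone
  mul_mem' := by
    intro a b ha hb
    obtain ⟨i, rfl⟩ := surjT a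
    obtain ⟨j, rfl⟩ := surjT b
    exact dAmul i j ha hb
  inv_mem' := by
    intro a ha
    obtain ⟨i, rfl⟩ := surjT a
    exact dAinv i ha

/-- The Klein four subgroup of `Perm (Fin 4)`. -/
private def V4sub : Subgroup (Perm (Fin 4)) where
  carrier := {σ | σ ^ 2 = 1 ∧ isEven σ}
  one_mem' := dVone
  mul_mem' := by
    intro a b ha hb
    obtain ⟨i, rfl⟩ := surjT a
    obtain ⟨j, rfl⟩ := surjT b
    exact dVmul i j ha hb
  inv_mem' := by
    intro a ha
    obtain ⟨i, rfl⟩ := surjT a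
    exact dVinv i ha

private lemma perm4_solvable : Group.IsSolvable (Perm (Fin 4)) := by
  have hA : derivedSeries (Perm (Fin 4)) 1 ≤ A4sub := by
    rw [derivedSeries_one, commutator_def, Subgroup.commutator_le]
    intro g _ h _
    obtain ⟨i, rfl⟩ := surjT g
    obtain ⟨j, rfl⟩ := surjT h
    exact d1 i j
  have hV : derivedSeries (Perm (Fin 4)) (1 + 1) ≤ V4sub := by
    rw [derivedSeries_succ]
    refine le_trans (Subgroup.commutator_mono hA hA) (Subgroup.commutator_le.mpr ?_)
    intro g hg h hh
    obtain ⟨i, rfl⟩ := surjT g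
    obtain ⟨j, rfl⟩ := surjT h
    exact d2 i j hg hh
  have hB : derivedSeries (Perm (Fin 4)) (1 + 1 + 1) = ⊥ := by
    rw [eq_bot_iff, derivedSeries_succ]
    refine le_trans (Subgroup.commutator_mono hV hV) (Subgroup.commutator_le.mpr ?_)
    intro g hg h hh
    obtain ⟨i, rfl⟩ := surjT g
    obtain ⟨j, rfl⟩ := surjT h
    exact Subgroup.mem_bot.mpr (d3 i j hg hh)
  exact ⟨⟨1 + 1 + 1, hB⟩⟩

private lemma perm_solvable {β : Type*} [Finite β] (h : Nat.card β ≤ 4) :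
    Group.IsSolvable (Perm β) := by
  haveI := Fintype.ofFinite β
  haveI := perm4_solvable
  have hcard : Fintype.card β ≤ Fintype.card (Fin 4) := by
    rwa [Fintype.card_fin, ← Nat.card_eq_fintype_card]
  obtain ⟨ι⟩ := Function.Embedding.nonempty_of_card_le hcard
  exact solvable_of_solvable_injective (Equiv.Perm.viaEmbeddingHom_injective ι)

end Perm4

/-! ### Main theorem. -/

private lemma ws_index_eq_one (K : Subgroup G) (h0 : K.index ≠ 0) (h4 : K.index ≤ 4) :
    K.index = 1 := by
  haveI : Finite (G ⧸ K) := Nat.finite_of_card_ne_zero h0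
  haveI : Group.IsSolvable (Equiv.Perm (G ⧸ K)) := perm_solvable h4
  have hdvd : Nat.card (Equiv.Perm (G ⧸ K)) ∣ 24 := by
    haveI := Classical.decEq (G ⧸ K)
    haveI := Fintype.ofFinite (G ⧸ K)
    rw [Nat.card_eq_fintype_card, Fintype.card_perm]
    have h4' : Fintype.card (G ⧸ K) ≤ 4 := by
      rwa [← Nat.card_eq_fintype_card]
    have : Nat.factorial 4 = 24 := rfl
    rw [← this]
    exact Nat.factorial_dvd_factorial h4'
  obtain ⟨n, hn⟩ := (inferInstance : Group.IsSolvable (Equiv.Perm (G ⧸ K))).solvable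
  have htriv : ∀ g : G, MulAction.toPermHom G (G ⧸ K) g = 1 := by
    intro g
    have := map_mem_derivedSeries hdvd (MulAction.toPermHom G (G ⧸ K)) n g
    rwa [hn, Subgroup.mem_bot] at this
  have hker : K.normalCore = ⊤ := by
    rw [Subgroup.normalCore_eq_ker]
    rw [eq_top_iff]
    intro g _
    exact htriv g
  have hKtop : K = ⊤ := by
    rw [eq_top_iff, ← hker]
    exact Subgroup.normalCore_le K
  rw [hKtop, Subgroup.index_top]

/-- `G` has no subgroup of index 2, 3, or 4. -/
theorem ws_no_small_index_subgroups (K : Subgroup G) :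
    K.index ≠ 2 ∧ K.index ≠ 3 ∧ K.index ≠ 4 := by
  refine ⟨fun h => ?_, fun h => ?_, fun h => ?_⟩ <;>
    · have := ws_index_eq_one K (by omega) (by omega)
      omega
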